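/- The optimal delay value is nonincreasing in the cancellation set: if R_∅ is nonempty, then for any Γ ⊆ Γ' ⊆ C, D(Γ') ≤ D(Γ), where D(Γ) = min over x ∈ R_Γ of Σ_i w_i (x_i − s_i). -/

import Mathlib

open Finset
open scoped Classical

noncomputable section

/-- The cancellation-adjusted vector: component `i` is zeroed out if flight `i ∈ Γ`. -/
def cancel {n : ℕ} (Γ : Finset (Fin n)) (v : Fin n → ℝ) : Fin n → ℝ :=
  fun i => if i ∈ Γ then 0 else v i

/-- The feasible region `R_Γ` of departure-time vectors. -/
def region {n : ℕ} (s zo zd e r t d : Fin n → ℝ) (S : Finset (Fin n))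
    (Γ : Finset (Fin n)) : Set (Fin n → ℝ) :=
  {x | (∀ i, s i ≤ x i) ∧
       (∀ i, -zo i ≤ x i) ∧
       (∀ i, x i ≤ e i - zd i - cancel Γ r i - cancel Γ t i - cancel Γ d i) ∧
       (∀ (i : Fin n) (h : (i : ℕ) + 1 < n),
          (⟨(i : ℕ) + 1, h⟩ : Fin n) ∉ S →
          cancel Γ r i + cancel Γ t i + cancel Γ d i ≤ x ⟨(i : ℕ) + 1, h⟩ - x i)}

/-- The weighted-delay objective `Σ_i w_i (x_i - s_i)`. -/
def delayObj {n : ℕ} (w s : Fin n → ℝ) (x : Fin n → ℝ) : ℝ :=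
  ∑ i, w i * (x i - s i)

/-- The optimal delay value `D(Γ)`. -/
def Dval {n : ℕ} (s zo zd e r t d w : Fin n → ℝ) (S Γ : Finset (Fin n)) : ℝ :=
  sInf (delayObj w s '' region s zo zd e r t d S Γ)

/-- The total cost `OPT(Γ) = D(Γ) + Σ_{i ∈ Γ} p_i`. -/
def OPT {n : ℕ} (s zo zd e r t d w p : Fin n → ℝ) (S Γ : Finset (Fin n)) : ℝ :=
  Dval s zo zd e r t d w S Γ + ∑ i ∈ Γ, p i

lemma cancel_anti {n : ℕ} {Γ Γ' : Finset (Fin n)} (h : Γ ⊆ Γ') {v : Fin n → ℝ}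
    (hv : ∀ i, 0 ≤ v i) (i : Fin n) : cancel Γ' v i ≤ cancel Γ v i := by
  unfold cancel
  by_cases hi : i ∈ Γ
  · simp [hi, h hi]
  · by_cases hi' : i ∈ Γ'
    · simp [hi, hi', hv i]
    · simp [hi, hi']

lemma region_mono {n : ℕ} (s zo zd e r t d : Fin n → ℝ) (S : Finset (Fin n))
    {Γ Γ' : Finset (Fin n)} (h : Γ ⊆ Γ')
    (hr : ∀ i, 0 ≤ r i) (ht : ∀ i, 0 ≤ t i) (hd : ∀ i, 0 ≤ d i) :
    region s zo zd e r t d S Γ ⊆ region s zo zd e r t d S Γ' := by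
  rintro x ⟨h1, h2, h3, h4⟩
  refine ⟨h1, h2, fun i => ?_, fun i hi hiS => ?_⟩
  · have := h3 i
    have hrr := cancel_anti h hr i
    have htt := cancel_anti h ht i
    have hdd := cancel_anti h hd i
    linarith
  · have := h4 i hi hiS
    have hrr := cancel_anti h hr i
    have htt := cancel_anti h ht i
    have hdd := cancel_anti h hd i
    linarith

/-- The optimal delay value `D(Γ)` is nonincreasing in the cancellation set:
if `R_∅` is nonempty and `Γ ⊆ Γ' ⊆ C`, then `D(Γ') ≤ D(Γ)`. -/
theorem stmt_6 {n : ℕ} (hn : 0 < n)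
    (s zo zd e r t d w : Fin n → ℝ) (S C : Finset (Fin n))
    (hr : ∀ i, 0 < r i) (ht : ∀ i, 0 < t i) (hd : ∀ i, 0 ≤ d i)
    (hw : ∀ i, 0 ≤ w i)
    (hS : (⟨0, hn⟩ : Fin n) ∈ S)
    (hne : (region s zo zd e r t d S ∅).Nonempty)
    (Γ Γ' : Finset (Fin n)) (hΓΓ' : Γ ⊆ Γ') (hΓ'C : Γ' ⊆ C) :
    Dval s zo zd e r t d w S Γ' ≤ Dval s zo zd e r t d w S Γ := by
  have hr' : ∀ i, 0 ≤ r i := fun i => (hr i).le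
  have ht' : ∀ i, 0 ≤ t i := fun i => (ht i).le
  have hsub : region s zo zd e r t d S Γ ⊆ region s zo zd e r t d S Γ' :=
    region_mono s zo zd e r t d S hΓΓ' hr' ht' hd
  have hsub0 : region s zo zd e r t d S ∅ ⊆ region s zo zd e r t d S Γ :=
    region_mono s zo zd e r t d S (Finset.empty_subset Γ) hr' ht' hd
  apply csInf_le_csInf
  · refine ⟨0, ?_⟩
    rintro y ⟨x, hx, rfl⟩
    exact Finset.sum_nonneg fun i _ => mul_nonneg (hw i) (by linarith [hx.1 i])
  · exact (hne.mono hsub0).image _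
  · exact Set.image_mono hsub
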